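/- Let t be a nonzero complex number and n ≥ 2. Consider the n×n matrices B_{ij} (i≠j) equal to the identity except that row i has entry t^{-1} at (i,i) and entry 1−t^{-1} at (i,j), together with the permutation matrices A_i (1 ≤ i ≤ n−1) swapping basis vectors e_i and e_{i+1}. Then the vector v = (1,1,...,1)^T is fixed by all B_{ij} and all A_i; in particular the representation ρ̂_B of C_n they generate is reducible. -/

import Mathlib

open Matrix

/-- The image of `ε i j` under Bardakov's extension `ρ̂_B` of the Burau representation,
at complex parameter `t`. -/
noncomputable def burauExt (n : ℕ) (t : ℂ) (i j : Fin n) : Matrix (Fin n) (Fin n) ℂ :=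
  Matrix.of fun r c =>
    if r = i ∧ c = i then t⁻¹
    else if r = i ∧ c = j then 1 - t⁻¹
    else if r = c then 1 else 0

/-- The permutation matrix swapping the basis vectors `e i` and `e (i+1)` of `ℂ^(d+1)`,
the image of the transposition generator `α i` under `ρ̂_B`. -/
noncomputable def swapMat (d : ℕ) (i : Fin d) : Matrix (Fin (d+1)) (Fin (d+1)) ℂ :=
  Matrix.of fun r c =>
    if (r = i.castSucc ∧ c = i.succ) ∨ (r = i.succ ∧ c = i.castSucc) then 1
    else if r = c ∧ r ≠ i.castSucc ∧ r ≠ i.succ then 1 else 0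

lemma burau_ones (n : ℕ) (t : ℂ) (i j : Fin n) (hij : i ≠ j) :
    (burauExt n t i j).mulVec (fun _ => 1) = fun _ => 1 := by
  funext r
  simp only [mulVec, dotProduct, burauExt, of_apply, mul_one]
  by_cases hr : r = i
  · subst hr
    have h : (fun c : Fin n =>
        if r = r ∧ c = r then t⁻¹
        else if r = r ∧ c = j then 1 - t⁻¹
        else if r = c then (1:ℂ) else 0)
        = fun c => (if c = r then t⁻¹ else 0) + (if c = j then 1 - t⁻¹ else 0) := by
      funext c
      by_cases h1 : c = r
      · subst h1; simp [hij]
      · by_cases h2 : c = j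
        · simp [h1, h2, Ne.symm hij]
        · simp [h1, h2, show ¬ r = c from fun h => h1 h.symm]
    rw [h, Finset.sum_add_distrib, Finset.sum_ite_eq' Finset.univ r,
      Finset.sum_ite_eq' Finset.univ j]
    simp
  · have h : (fun c : Fin n =>
        if r = i ∧ c = i then t⁻¹
        else if r = i ∧ c = j then 1 - t⁻¹
        else if r = c then (1:ℂ) else 0)
        = fun c => if c = r then (1:ℂ) else 0 := by
      funext c
      by_cases h1 : c = r
      · subst h1; simp [hr]
      · simp [h1, hr, show ¬ r = c from fun h => h1 h.symm]
    rw [h, Finset.sum_ite_eq' Finset.univ r]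
    simp

lemma swap_ones (d : ℕ) (i : Fin d) :
    (swapMat d i).mulVec (fun _ => (1:ℂ)) = fun _ => 1 := by
  have hne : (i.castSucc : Fin (d+1)) ≠ i.succ := (Fin.castSucc_lt_succ : i.castSucc < i.succ).ne
  funext r
  simp only [mulVec, dotProduct, swapMat, of_apply, mul_one]
  by_cases h1 : r = i.castSucc
  · have h : (fun c : Fin (d+1) =>
        if (r = i.castSucc ∧ c = i.succ) ∨ (r = i.succ ∧ c = i.castSucc) then (1:ℂ)
        else if r = c ∧ r ≠ i.castSucc ∧ r ≠ i.succ then 1 else 0)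
        = fun c => if c = i.succ then (1:ℂ) else 0 := by
      funext c
      by_cases h2 : c = i.succ <;> simp [h1, h2, hne]
    rw [h, Finset.sum_ite_eq' Finset.univ i.succ]; simp
  · by_cases h2 : r = i.succ
    · have h : (fun c : Fin (d+1) =>
          if (r = i.castSucc ∧ c = i.succ) ∨ (r = i.succ ∧ c = i.castSucc) then (1:ℂ)
          else if r = c ∧ r ≠ i.castSucc ∧ r ≠ i.succ then 1 else 0)
          = fun c => if c = i.castSucc then (1:ℂ) else 0 := by
        funext c
        by_cases h3 : c = i.castSucc <;> simp [h1, h2, h3, hne, Ne.symm hne]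
      rw [h, Finset.sum_ite_eq' Finset.univ i.castSucc]; simp
    · have h : (fun c : Fin (d+1) =>
          if (r = i.castSucc ∧ c = i.succ) ∨ (r = i.succ ∧ c = i.castSucc) then (1:ℂ)
          else if r = c ∧ r ≠ i.castSucc ∧ r ≠ i.succ then 1 else 0)
          = fun c => if c = r then (1:ℂ) else 0 := by
        funext c
        by_cases h3 : c = r
        · simp [h1, h2, h3]
        · simp [h1, h2, h3, show ¬ r = c from fun h => h3 h.symm]
      rw [h, Finset.sum_ite_eq' Finset.univ r]; simp

theorem stmt5 (d : ℕ) (hd : 1 ≤ d) (t : ℂ) (ht : t ≠ 0) :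
    (∀ i j : Fin (d+1), i ≠ j →
        (burauExt (d+1) t i j).mulVec (fun _ => 1) = fun _ => 1) ∧
    (∀ i : Fin d, (swapMat d i).mulVec (fun _ => (1:ℂ)) = fun _ => 1) ∧
    ∃ S : Submodule ℂ (Fin (d+1) → ℂ), S ≠ ⊥ ∧ S ≠ ⊤ ∧
      (∀ i j : Fin (d+1), i ≠ j → ∀ x ∈ S, (burauExt (d+1) t i j).mulVec x ∈ S) ∧
      (∀ i : Fin d, ∀ x ∈ S, (swapMat d i).mulVec x ∈ S) := by
  refine ⟨fun i j hij => burau_ones _ t i j hij, fun i => swap_ones d i, ?_⟩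
  set ones : Fin (d+1) → ℂ := fun _ => 1 with hones
  refine ⟨Submodule.span ℂ {ones}, ?_, ?_, ?_, ?_⟩
  · intro h
    have : ones ∈ (⊥ : Submodule ℂ (Fin (d+1) → ℂ)) := h ▸ Submodule.mem_span_singleton_self ones
    rw [Submodule.mem_bot] at this
    have := congrFun this 0
    simp [hones] at this
  · intro h
    have h01 : (0 : Fin (d+1)) ≠ 1 := by
      have : (1 : ℕ) < d + 1 := Nat.lt_succ_of_le hd
      simp [Fin.ext_iff, Nat.mod_eq_of_lt this]
    have : (Pi.single 0 1 : Fin (d+1) → ℂ) ∈ Submodule.span ℂ {ones} := by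
      rw [h]; trivial
    obtain ⟨a, ha⟩ := Submodule.mem_span_singleton.mp this
    have h0 := congrFun ha 0
    have h1 := congrFun ha 1
    simp [hones, Pi.single_eq_same, Pi.single_eq_of_ne h01.symm] at h0 h1
    rw [h0] at h1
    exact one_ne_zero h1
  · intro i j hij x hx
    obtain ⟨a, ha⟩ := Submodule.mem_span_singleton.mp hx
    rw [← ha, mulVec_smul, burau_ones _ t i j hij]
    exact Submodule.smul_mem _ a (Submodule.mem_span_singleton_self ones)
  · intro i x hx
    obtain ⟨a, ha⟩ := Submodule.mem_span_singleton.mp hx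
    rw [← ha, mulVec_smul, swap_ones d i]
    exact Submodule.smul_mem _ a (Submodule.mem_span_singleton_self ones)
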